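/- Let 0 ≠ p, q ∈ K⟨X⟩ be given by minimal admissible linear systems of dimensions n_p and n_q respectively (both ≥ 2). Then the product pq has a minimal admissible linear system of dimension n_p + n_q − 1; equivalently, rank(pq) = rank(p) + rank(q) − 1. -/

import Mathlib

set_option linter.unusedSectionVars false
open scoped Classical

open FreeAlgebra

namespace ALSProof

variable {K : Type*} [Field K] {X : Type*} [Fintype X]

abbrev MA (K X : Type*) [Field K] := MonoidAlgebra K (FreeMonoid X)

instance MA_coeFun : CoeFun (MA K X) (fun _ => FreeMonoid X → K) := ⟨fun f => ⇑f.coeff⟩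

open MonoidAlgebra

/-- Left quotient operator: `(Lop w f) v = f (w * v)`. -/
noncomputable def Lop (w : FreeMonoid X) : MA K X →ₗ[K] MA K X :=
  (MonoidAlgebra.coeffLinearEquiv K).symm.toLinearMap ∘ₗ
    Finsupp.lcomapDomain (fun v => w * v) (mul_right_injective w) ∘ₗ
    (MonoidAlgebra.coeffLinearEquiv K).toLinearMap

@[simp] lemma Lop_apply (w : FreeMonoid X) (f : MA K X) (v : FreeMonoid X) :
    Lop w f v = f (w * v) := rfl

lemma Lop_one (f : MA K X) : Lop 1 f = f := by
  ext v; simp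

lemma Lop_mul (u w : FreeMonoid X) (f : MA K X) :
    Lop (u * w) f = Lop w (Lop u f) := by
  ext v; simp [mul_assoc]

lemma Lop_single_mul (w v : FreeMonoid X) (c : K) :
    Lop w (single (w * v) c) = single v c := by
  ext t
  rw [Lop_apply, MonoidAlgebra.coeff_single_apply, MonoidAlgebra.coeff_single_apply]
  by_cases hv : v = t
  · subst hv; simp
  · rw [if_neg (fun hc => hv (mul_left_cancel hc)), if_neg hv]

lemma Lop_single_of_ne (w u : FreeMonoid X) (c : K)
    (h : ∀ v, u ≠ w * v) : Lop w (single u c) = 0 := by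
  ext t
  rw [Lop_apply, MonoidAlgebra.coeff_single_apply, if_neg (fun hc => h t hc)]
  simp


lemma one_ne_of_mul (ℓ : X) (t : FreeMonoid X) : (1 : FreeMonoid X) ≠ FreeMonoid.of ℓ * t := by
  intro h
  have := congrArg FreeMonoid.length h
  rw [FreeMonoid.length_one, FreeMonoid.length_mul, FreeMonoid.length_of] at this
  omega

lemma of_mul_inj {m ℓ : X} {w t : FreeMonoid X} (h : FreeMonoid.of m * w = FreeMonoid.of ℓ * t) :
    m = ℓ ∧ w = t := by
  injection h with h1 h2
  exact ⟨h1, h2⟩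

abbrev fm (l : List X) : FreeMonoid X := l

lemma nil_eq_one : fm ([] : List X) = 1 := rfl

lemma cons_eq_of_mul (m : X) (u' : List X) : fm (m :: u') = FreeMonoid.of m * fm u' := rfl

lemma key1 (ℓ : X) (f g : MA K X) :
    Lop (FreeMonoid.of ℓ) (f * g) =
      (Lop (FreeMonoid.of ℓ) f) * g + f 1 • Lop (FreeMonoid.of ℓ) g := by
  induction f using MonoidAlgebra.induction_linear with
  | zero => simp
  | add f1 f2 h1 h2 =>
    rw [add_mul, map_add, h1, h2, MonoidAlgebra.coeff_add, Finsupp.add_apply, add_smul, map_add, add_mul]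
    abel
  | single u a =>
    induction g using MonoidAlgebra.induction_linear with
    | zero => simp
    | add g1 g2 h1 h2 =>
      rw [mul_add, map_add, h1, h2, map_add, mul_add, smul_add]
      abel
    | single v b =>
      show Lop (FreeMonoid.of ℓ) (single u a * single v b) =
        (Lop (FreeMonoid.of ℓ) (single u a)) * single v b
          + (single u a : MA K X) 1 • Lop (FreeMonoid.of ℓ) (single v b)
      rcases u with _ | ⟨m, u'⟩
      · rw [show @List.nil X = (1 : FreeMonoid X) from rfl]
        have h1 : Lop (FreeMonoid.of ℓ) (single (1 : FreeMonoid X) a : MA K X) = 0 :=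
          Lop_single_of_ne _ _ _ (fun t => one_ne_of_mul ℓ t)
        have h2 : ((single (1 : FreeMonoid X) a : MA K X)) 1 = a := by simp
        have h3 : (single (1 : FreeMonoid X) a : MA K X) * single v b = single v (a * b) := by
          rw [MonoidAlgebra.single_mul_single, one_mul]
        rw [h1, h2, h3, zero_mul, zero_add]
        rw [show (single v (a * b) : MA K X) = a • single v b by
          rw [MonoidAlgebra.smul_single, smul_eq_mul], map_smul]
      · rw [show @List.cons X m u' = (FreeMonoid.of m * fm u' : FreeMonoid X) from rfl]
        have h2 : ((single (FreeMonoid.of m * fm u') a : MA K X)) 1 = 0 := by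
          rw [MonoidAlgebra.coeff_single_apply, if_neg (fun hc => one_ne_of_mul m (fm u') hc.symm)]
        rw [h2, zero_smul, add_zero, MonoidAlgebra.single_mul_single]
        by_cases hm : m = ℓ
        · subst hm
          rw [show FreeMonoid.of m * fm u' * v = FreeMonoid.of m * (fm u' * v) from mul_assoc _ _ _,
            Lop_single_mul, Lop_single_mul, MonoidAlgebra.single_mul_single]
        · have hne : ∀ t, FreeMonoid.of m * fm u' * v ≠ FreeMonoid.of ℓ * t := by
            intro t hc
            rw [mul_assoc] at hc
            exact hm (of_mul_inj hc).1
          have hne2 : ∀ t, FreeMonoid.of m * fm u' ≠ FreeMonoid.of ℓ * t := by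
            intro t hc
            exact hm (of_mul_inj hc).1
          rw [Lop_single_of_ne _ _ _ hne, Lop_single_of_ne _ _ _ hne2, zero_mul]

lemma key2 (f : MA K X) :
    f = single 1 (f 1) + ∑ ℓ : X, (single (FreeMonoid.of ℓ) 1 : MA K X) * Lop (FreeMonoid.of ℓ) f := by
  induction f using MonoidAlgebra.induction_linear with
  | zero => simp
  | add f1 f2 h1 h2 =>
    rw [MonoidAlgebra.coeff_add, Finsupp.add_apply, MonoidAlgebra.single_add]
    conv_lhs => rw [h1, h2]
    have : ∀ ℓ ∈ Finset.univ, (single (FreeMonoid.of ℓ) 1 : MA K X) * Lop (FreeMonoid.of ℓ) (f1 + f2)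
        = (single (FreeMonoid.of ℓ) 1 : MA K X) * Lop (FreeMonoid.of ℓ) f1
          + (single (FreeMonoid.of ℓ) 1 : MA K X) * Lop (FreeMonoid.of ℓ) f2 := by
      intro ℓ _
      rw [map_add, mul_add]
    rw [Finset.sum_congr rfl this, Finset.sum_add_distrib]
    abel
  | single u a =>
    show (single u a : MA K X) = single 1 ((single u a : MA K X) 1)
      + ∑ ℓ : X, (single (FreeMonoid.of ℓ) 1 : MA K X) * Lop (FreeMonoid.of ℓ) (single u a)
    rcases u with _ | ⟨m, u'⟩
    · rw [show @List.nil X = (1 : FreeMonoid X) from rfl]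
      have h1 : ∀ ℓ : X, Lop (FreeMonoid.of ℓ) (single (1 : FreeMonoid X) a : MA K X) = 0 :=
        fun ℓ => Lop_single_of_ne _ _ _ (fun t => one_ne_of_mul ℓ t)
      have h2 : ((single (1 : FreeMonoid X) a : MA K X)) 1 = a := by simp
      simp [h1, h2]
    · rw [show @List.cons X m u' = (FreeMonoid.of m * fm u' : FreeMonoid X) from rfl]
      have h2 : ((single (FreeMonoid.of m * fm u') a : MA K X)) 1 = 0 := by
        rw [MonoidAlgebra.coeff_single_apply, if_neg (fun hc => one_ne_of_mul m (fm u') hc.symm)]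
      have h3 : ∀ ℓ : X, Lop (FreeMonoid.of ℓ) (single (FreeMonoid.of m * fm u') a : MA K X)
          = if ℓ = m then single (fm u') a else 0 := by
        intro ℓ
        by_cases hm : ℓ = m
        · subst hm; rw [if_pos rfl, Lop_single_mul]
        · rw [if_neg hm]
          exact Lop_single_of_ne _ _ _ (fun t hc => hm (of_mul_inj hc).1.symm)
      rw [h2, MonoidAlgebra.single_zero, zero_add]
      simp only [h3, mul_ite, mul_zero, Finset.sum_ite_eq', Finset.mem_univ, if_pos,
        MonoidAlgebra.single_mul_single, one_mul]

lemma coeff_one_mul (f g : MA K X) : (f * g) 1 = f 1 * g 1 := by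
  induction f using MonoidAlgebra.induction_linear with
  | zero => simp
  | add f1 f2 h1 h2 => rw [add_mul, MonoidAlgebra.coeff_add, MonoidAlgebra.coeff_add, Finsupp.add_apply, Finsupp.add_apply, h1, h2, add_mul]
  | single u a =>
    induction g using MonoidAlgebra.induction_linear with
    | zero => simp
    | add g1 g2 h1 h2 => rw [mul_add, MonoidAlgebra.coeff_add, MonoidAlgebra.coeff_add, Finsupp.add_apply, Finsupp.add_apply, h1, h2, mul_add]
    | single v b =>
      rw [MonoidAlgebra.single_mul_single, MonoidAlgebra.coeff_single_apply, MonoidAlgebra.coeff_single_apply,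
        MonoidAlgebra.coeff_single_apply]
      by_cases hu : u = 1
      · by_cases hv : v = 1
        · subst hu; subst hv; simp
        · subst hu
          rw [one_mul, if_pos rfl, if_neg hv, if_neg hv, mul_zero]
      · have huv : ¬ (u * v = 1) := by
          intro hc
          rcases List.append_eq_nil_iff.mp hc with ⟨h1', _⟩
          exact hu h1'
        rw [if_neg huv, if_neg hu, zero_mul]

/-! ### Degree -/

noncomputable def deg (f : MA K X) : ℕ := f.coeff.support.sup FreeMonoid.length

lemma length_le_deg {f : MA K X} {w : FreeMonoid X} (h : f w ≠ 0) : w.length ≤ deg f :=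
  Finset.le_sup (Finsupp.mem_support_iff.2 h)

lemma apply_eq_zero_of_deg_lt {f : MA K X} {w : FreeMonoid X} (h : deg f < w.length) : f w = 0 := by
  by_contra hc
  exact absurd (length_le_deg hc) (not_le.2 h)

lemma exists_len_deg {f : MA K X} (h : f ≠ 0) : ∃ w, f w ≠ 0 ∧ w.length = deg f := by
  obtain ⟨w, hw, hs⟩ := Finset.exists_mem_eq_sup f.coeff.support
    (Finsupp.support_nonempty_iff.2 (mt MonoidAlgebra.coeff_eq_zero.1 h)) FreeMonoid.length
  exact ⟨w, Finsupp.mem_support_iff.1 hw, hs.symm⟩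

lemma factor_unique {u v x y : FreeMonoid X} (h : x * y = u * v)
    (hx : x.length ≤ u.length) (hy : y.length ≤ v.length) : x = u ∧ y = v := by
  have hlen : x.length + y.length = u.length + v.length := by
    rw [← FreeMonoid.length_mul, ← FreeMonoid.length_mul, h]
  have hxu : x.length = u.length := le_antisymm hx (by omega)
  exact List.append_inj h hxu

lemma mul_apply_top (f g : MA K X) {u v : FreeMonoid X}
    (hu : u.length = deg f) (hv : v.length = deg g) :
    (f * g) (u * v) = f u * g v := by
  classical
  rw [MonoidAlgebra.mul_apply, Finsupp.sum]
  have hterm : ∀ x ∈ f.coeff.support,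
      (Finsupp.sum g.coeff fun a₂ b₂ => if x * a₂ = u * v then f x * b₂ else 0)
        = if x = u then f u * g v else 0 := by
    intro x hx
    have hxl : x.length ≤ u.length := hu ▸ length_le_deg (Finsupp.mem_support_iff.1 hx)
    rw [Finsupp.sum]
    have hterm2 : ∀ y ∈ g.coeff.support, (if x * y = u * v then f x * g y else 0)
        = if x = u then (if y = v then f u * g v else 0) else 0 := by
      intro y hy
      have hyl : y.length ≤ v.length := hv ▸ length_le_deg (Finsupp.mem_support_iff.1 hy)
      by_cases hxy : x * y = u * v
      · obtain ⟨rfl, rfl⟩ := factor_unique hxy hxl hyl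
        rw [if_pos hxy, if_pos rfl, if_pos rfl]
      · rw [if_neg hxy]
        by_cases h1 : x = u
        · subst h1
          rw [if_pos rfl, if_neg (fun h2 : y = v => hxy (by rw [h2]))]
        · rw [if_neg h1]
    rw [Finset.sum_congr rfl hterm2]
    by_cases hxu : x = u
    · subst hxu
      simp only [eq_self_iff_true, if_true]
      rw [Finset.sum_ite_eq' g.coeff.support v (fun _ => f x * g v)]
      by_cases hv0 : v ∈ g.coeff.support
      · rw [if_pos hv0]
      · rw [if_neg hv0, Finsupp.notMem_support_iff.1 hv0, mul_zero]
    · simp only [if_neg hxu]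
      exact Finset.sum_const_zero
  rw [Finset.sum_congr rfl hterm, Finset.sum_ite_eq' f.coeff.support u (fun _ => f u * g v)]
  by_cases hu0 : u ∈ f.coeff.support
  · rw [if_pos hu0]
  · rw [if_neg hu0, Finsupp.notMem_support_iff.1 hu0, zero_mul]

/-! ### The low-degree subspace -/

def lowSpace (d : ℕ) : Submodule K (MA K X) where
  carrier := {x | ∀ w : FreeMonoid X, d ≤ w.length → x w = 0}
  add_mem' := by
    intro a b ha hb w hw
    rw [MonoidAlgebra.coeff_add, Finsupp.add_apply, ha w hw, hb w hw, add_zero]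
  zero_mem' := by intro w _; rfl
  smul_mem' := by
    intro c a ha w hw
    rw [MonoidAlgebra.coeff_smul_apply, ha w hw, smul_zero]

lemma exists_high_coeff {f g : MA K X} (hf : f ≠ 0) (hg : g ≠ 0) :
    ∃ w : FreeMonoid X, deg g ≤ w.length ∧ (f * g) w ≠ 0 := by
  obtain ⟨u, hu, hul⟩ := exists_len_deg hf
  obtain ⟨v, hv, hvl⟩ := exists_len_deg hg
  refine ⟨u * v, ?_, ?_⟩
  · rw [FreeMonoid.length_mul]; omega
  · rw [mul_apply_top f g hul hvl]
    exact mul_ne_zero hu hv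

lemma mul_ne_zero' {f g : MA K X} (hf : f ≠ 0) (hg : g ≠ 0) : f * g ≠ 0 := by
  obtain ⟨w, _, hw⟩ := exists_high_coeff hf hg
  intro hc
  rw [hc] at hw
  exact hw rfl

lemma mul_not_mem_lowSpace {f g : MA K X} (hf : f ≠ 0) (hg : g ≠ 0) :
    f * g ∉ lowSpace (K := K) (deg g) := by
  obtain ⟨w, hw1, hw2⟩ := exists_high_coeff hf hg
  intro hc
  exact hw2 (hc w hw1)

/-! ### Quotient spaces and the Hankel rank -/

noncomputable def Qspan (f : MA K X) : Submodule K (MA K X) :=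
  Submodule.span K (Set.range fun w : FreeMonoid X => Lop w f)

noncomputable def Qplus (f : MA K X) : Submodule K (MA K X) :=
  Submodule.span K {g | ∃ w : FreeMonoid X, w ≠ 1 ∧ Lop w f = g}

lemma Lop_eq_zero_of_deg_lt {f : MA K X} {w : FreeMonoid X} (h : deg f < w.length) :
    Lop w f = 0 := by
  ext v
  rw [Lop_apply]
  refine apply_eq_zero_of_deg_lt ?_
  rw [FreeMonoid.length_mul]
  omega

lemma range_Lop_finite (f : MA K X) : (Set.range fun w : FreeMonoid X => Lop w f).Finite := by
  have h1 : (Set.range fun w : FreeMonoid X => Lop w f) ⊆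
      ((fun w : FreeMonoid X => Lop w f) '' {w : FreeMonoid X | w.length ≤ deg f}) ∪ {0} := by
    rintro - ⟨w, rfl⟩
    by_cases hw : w.length ≤ deg f
    · exact Or.inl ⟨w, hw, rfl⟩
    · right
      rw [Set.mem_singleton_iff]
      exact Lop_eq_zero_of_deg_lt (by omega)
  have h2 : ({w : FreeMonoid X | w.length ≤ deg f}).Finite := List.finite_length_le X (deg f)
  exact Set.Finite.subset ((h2.image _).union (Set.finite_singleton 0)) h1

instance Qspan_fd (f : MA K X) : FiniteDimensional K (Qspan f) :=
  FiniteDimensional.span_of_finite K (range_Lop_finite f)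

lemma Qplus_le_Qspan (f : MA K X) : Qplus f ≤ Qspan f := by
  refine Submodule.span_le.2 ?_
  rintro - ⟨w, -, rfl⟩
  exact Submodule.subset_span ⟨w, rfl⟩

instance Qplus_fd (f : MA K X) : FiniteDimensional K (Qplus f) :=
  Submodule.finiteDimensional_of_le (Qplus_le_Qspan f)

noncomputable def hrank (f : MA K X) : ℕ := Module.finrank K (Qspan f)

lemma self_mem_Qspan (f : MA K X) : f ∈ Qspan f :=
  Submodule.subset_span ⟨1, Lop_one f⟩

lemma Lop_mem_Qspan (f : MA K X) (w : FreeMonoid X) : Lop w f ∈ Qspan f :=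
  Submodule.subset_span ⟨w, rfl⟩

lemma Lop_maps_Qspan (f : MA K X) (u : FreeMonoid X) {x : MA K X} (hx : x ∈ Qspan f) :
    Lop u x ∈ Qspan f := by
  refine Submodule.span_induction ?_ ?_ ?_ ?_ hx
  · rintro - ⟨w, rfl⟩
    rw [← Lop_mul]
    exact Lop_mem_Qspan f _
  · rw [map_zero]; exact Submodule.zero_mem _
  · intro a b _ _ ha hb
    rw [map_add]; exact Submodule.add_mem _ ha hb
  · intro c a _ ha
    rw [map_smul]; exact Submodule.smul_mem _ c ha

lemma Lop_maps_Qplus (f : MA K X) (u : FreeMonoid X) (hu : u ≠ 1) {x : MA K X} (hx : x ∈ Qspan f) :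
    Lop u x ∈ Qplus f := by
  refine Submodule.span_induction ?_ ?_ ?_ ?_ hx
  · rintro - ⟨w, rfl⟩
    rw [← Lop_mul]
    refine Submodule.subset_span ⟨w * u, ?_, rfl⟩
    intro hc
    have := congrArg FreeMonoid.length hc
    rw [FreeMonoid.length_mul, FreeMonoid.length_one] at this
    have : u.length = 0 := by omega
    exact hu (List.eq_nil_of_length_eq_zero this)
  · rw [map_zero]; exact Submodule.zero_mem _
  · intro a b _ _ ha hb
    rw [map_add]; exact Submodule.add_mem _ ha hb
  · intro c a _ ha
    rw [map_smul]; exact Submodule.smul_mem _ c ha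

lemma Qplus_le_lowSpace (f : MA K X) : Qplus f ≤ lowSpace (deg f) := by
  refine Submodule.span_le.2 ?_
  rintro - ⟨w, hw, rfl⟩
  intro v hv
  rw [Lop_apply]
  refine apply_eq_zero_of_deg_lt ?_
  have hw1 : 1 ≤ w.length := by
    rcases Nat.eq_zero_or_pos w.length with h | h
    · exact absurd (List.eq_nil_of_length_eq_zero h) hw
    · exact h
  rw [FreeMonoid.length_mul]
  omega

lemma self_not_mem_Qplus {f : MA K X} (hf : f ≠ 0) : f ∉ Qplus f := by
  intro hc
  obtain ⟨w, hw, hwl⟩ := exists_len_deg hf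
  exact hw (Qplus_le_lowSpace f hc w (le_of_eq hwl.symm))

/-! ### Quotients of a product -/

lemma of_ne_one (ℓ : X) : FreeMonoid.of ℓ ≠ 1 := by
  intro h
  exact FreeMonoid.of_ne_one ℓ h

lemma append_eq_mul_of (u : List X) (ℓ : X) :
    fm (u ++ [ℓ]) = (fm u) * FreeMonoid.of ℓ := by
  show (u ++ [ℓ] : FreeMonoid X) = _
  rfl

/-- `Aab k q` : span of quotients of `q` by words of length `> k`. -/
noncomputable def Aab (k : ℕ) (q : MA K X) : Submodule K (MA K X) :=
  Submodule.span K {g | ∃ b : FreeMonoid X, k < b.length ∧ Lop b q = g}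

lemma Aab_zero_eq_Qplus (q : MA K X) : Aab 0 q = Qplus q := by
  unfold Aab Qplus
  congr 1
  ext g
  constructor
  · rintro ⟨b, hb, rfl⟩
    exact ⟨b, fun hc => by rw [hc] at hb; exact Nat.lt_irrefl 0 hb, rfl⟩
  · rintro ⟨b, hb, rfl⟩
    exact ⟨b, List.length_pos_iff.2 hb, rfl⟩

lemma Lop_of_maps_Aab (q : MA K X) (k : ℕ) (ℓ : X) {x : MA K X} (hx : x ∈ Aab k q) :
    Lop (FreeMonoid.of ℓ) x ∈ Aab (k + 1) q := by
  refine Submodule.span_induction ?_ ?_ ?_ ?_ hx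
  · rintro - ⟨b, hb, rfl⟩
    rw [← Lop_mul]
    refine Submodule.subset_span ⟨b * FreeMonoid.of ℓ, ?_, rfl⟩
    rw [FreeMonoid.length_mul, FreeMonoid.length_of]
    omega
  · rw [map_zero]; exact Submodule.zero_mem _
  · intro a b _ _ ha hb
    rw [map_add]; exact Submodule.add_mem _ ha hb
  · intro c a _ ha
    rw [map_smul]; exact Submodule.smul_mem _ c ha

/-- remainder of the quotient of a product -/
noncomputable def rem (p q : MA K X) (u : FreeMonoid X) : MA K X :=
  Lop u (p * q) - (Lop u p) * q

lemma rem_one (p q : MA K X) : rem p q 1 = 0 := by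
  rw [rem, Lop_one, Lop_one, sub_self]

lemma rem_step (p q : MA K X) (u : FreeMonoid X) (ℓ : X) :
    rem p q (u * FreeMonoid.of ℓ) =
      Lop (FreeMonoid.of ℓ) (rem p q u) + (p u) • Lop (FreeMonoid.of ℓ) q := by
  rw [rem, rem, Lop_mul, Lop_mul, map_sub, key1]
  have : (Lop u p) 1 = p u := by rw [Lop_apply, mul_one]
  rw [this]
  abel

lemma rem_mem_Qplus (p q : MA K X) (u : FreeMonoid X) : rem p q u ∈ Qplus q := by
  induction u using List.reverseRecOn with
  | nil =>
    rw [show @List.nil X = (1 : FreeMonoid X) from rfl, rem_one]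
    exact Submodule.zero_mem _
  | append_singleton u ℓ ih =>
    rw [show u ++ [ℓ] = fm u * FreeMonoid.of ℓ from rfl, rem_step]
    refine Submodule.add_mem _ ?_ (Submodule.smul_mem _ _ ?_)
    · -- Lop ℓ of Qplus q ⊆ Qplus q
      have h1 : Qplus q ≤ Qspan q := Qplus_le_Qspan q
      exact Lop_maps_Qplus q (FreeMonoid.of ℓ) (of_ne_one ℓ) (h1 ih)
    · exact Lop_maps_Qplus q (FreeMonoid.of ℓ) (of_ne_one ℓ) (self_mem_Qspan q)

/-- upper-bound decomposition of `Qspan (p*q)` -/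
lemma Qspan_mul_le (p q : MA K X) :
    Qspan (p * q) ≤ (Qspan p).map (LinearMap.mulRight K q) ⊔ Qplus q := by
  refine Submodule.span_le.2 ?_
  rintro - ⟨u, rfl⟩
  show Lop u (p * q) ∈ _
  have h1 : Lop u (p * q) = (Lop u p) * q + rem p q u := by rw [rem]; abel
  rw [h1]
  exact Submodule.add_mem _
    (Submodule.mem_sup_left ⟨Lop u p, Lop_mem_Qspan p u, rfl⟩)
    (Submodule.mem_sup_right (rem_mem_Qplus p q u))

lemma p_apply_long_zero {p : MA K X} {u : FreeMonoid X} (h : deg p < u.length) : p u = 0 :=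
  apply_eq_zero_of_deg_lt h

/-- the crucial downward identity: quotients of `p*q` by words extending a maximal
word of `p` recover quotients of `q` modulo longer quotients. -/
lemma keyC2 (p q : MA K X) {w0 : FreeMonoid X} (hw0 : w0.length = deg p) :
    ∀ a : FreeMonoid X, a ≠ 1 →
      rem p q (w0 * a) - (p w0) • Lop a q ∈ Aab a.length q := by
  intro a
  induction a using List.reverseRecOn with
  | nil => intro h; exact absurd rfl h
  | append_singleton a ℓ ih =>
    intro _
    rw [show a ++ [ℓ] = fm a * FreeMonoid.of ℓ from rfl]
    rcases eq_or_ne (fm a) 1 with ha | ha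
    · -- a = 1 : base case
      rw [ha, one_mul, rem_step, add_sub_cancel_right, FreeMonoid.length_of]
      exact Lop_of_maps_Aab q 0 ℓ (by rw [Aab_zero_eq_Qplus]; exact rem_mem_Qplus p q w0)
    · -- a ≠ 1 : inductive step
      have hstep := rem_step p q (w0 * fm a) ℓ
      rw [mul_assoc] at hstep
      have hlong : p (w0 * fm a) = 0 := by
        refine p_apply_long_zero ?_
        rw [FreeMonoid.length_mul, hw0]
        have : 0 < (fm a).length := List.length_pos_iff.2 ha
        omega
      rw [hstep, hlong, zero_smul, add_zero]
      have hz := ih ha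
      set z := rem p q (w0 * fm a) - (p w0) • Lop (fm a) q with hzdef
      have hrw : rem p q (w0 * fm a) = z + (p w0) • Lop (fm a) q := by rw [hzdef]; abel
      rw [hrw, map_add, map_smul, ← Lop_mul]
      have h3 : Lop (FreeMonoid.of ℓ) z ∈ Aab ((fm a).length + 1) q :=
        Lop_of_maps_Aab q _ ℓ hz
      have hlen : (fm a * FreeMonoid.of ℓ).length = (fm a).length + 1 := by
        rw [FreeMonoid.length_mul, FreeMonoid.length_of]
      rw [hlen]
      have : Lop (FreeMonoid.of ℓ) z + p w0 • Lop (fm a * FreeMonoid.of ℓ) q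
          - p w0 • Lop (fm a * FreeMonoid.of ℓ) q = Lop (FreeMonoid.of ℓ) z := by abel
      rw [this]
      exact h3

lemma Qplus_le_Qspan_mul {p q : MA K X} (hp : p ≠ 0) :
    Qplus q ≤ Qspan (p * q) := by
  obtain ⟨w0, hw0ne, hw0len⟩ := exists_len_deg hp
  -- downward induction
  have main : ∀ n : ℕ, ∀ a : FreeMonoid X, a ≠ 1 → deg q < a.length + n →
      Lop a q ∈ Qspan (p * q) := by
    intro n
    induction n with
    | zero =>
      intro a _ hlen
      rw [Lop_eq_zero_of_deg_lt (by omega)]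
      exact Submodule.zero_mem _
    | succ n ihn =>
      intro a ha hlen
      have hz := keyC2 p q hw0len a ha
      have hAle : Aab a.length q ≤ Qspan (p * q) := by
        refine Submodule.span_le.2 ?_
        rintro - ⟨b, hb, rfl⟩
        refine ihn b ?_ (by omega)
        intro hc
        rw [hc, FreeMonoid.length_one] at hb
        exact Nat.not_lt_zero _ hb
      have hrem : rem p q (w0 * a) ∈ Qspan (p * q) := by
        have hLp : Lop (w0 * a) p = 0 := by
          refine Lop_eq_zero_of_deg_lt ?_
          rw [FreeMonoid.length_mul, hw0len]
          have : 0 < a.length := List.length_pos_iff.2 ha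
          omega
        rw [rem, hLp, zero_mul, sub_zero]
        exact Lop_mem_Qspan _ _
      have hsmul : (p w0) • Lop a q ∈ Qspan (p * q) := by
        have : (p w0) • Lop a q = rem p q (w0 * a) - (rem p q (w0 * a) - (p w0) • Lop a q) := by
          abel
        rw [this]
        exact Submodule.sub_mem _ hrem (hAle hz)
      have := Submodule.smul_mem (Qspan (p * q)) (p w0)⁻¹ hsmul
      rwa [smul_smul, inv_mul_cancel₀ hw0ne, one_smul] at this
  refine Submodule.span_le.2 ?_
  rintro - ⟨w, hw, rfl⟩
  exact main (deg q + 1) w hw (by omega)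

lemma pi_comp_injective {q : MA K X} (hq : q ≠ 0) :
    Function.Injective ((Qplus q).mkQ ∘ₗ LinearMap.mulRight K q) := by
  rw [← LinearMap.ker_eq_bot]
  rw [LinearMap.ker_eq_bot']
  intro f hf
  rw [LinearMap.comp_apply, LinearMap.mulRight_apply, Submodule.mkQ_apply,
    Submodule.Quotient.mk_eq_zero] at hf
  by_contra hne
  exact mul_not_mem_lowSpace hne hq (Qplus_le_lowSpace q hf)

lemma hrank_eq_Qplus_add_one {q : MA K X} (hq : q ≠ 0) :
    hrank q = Module.finrank K (Qplus q) + 1 := by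
  have hsup : Qspan q = Qplus q ⊔ (K ∙ q) := by
    refine le_antisymm ?_ ?_
    · refine Submodule.span_le.2 ?_
      rintro - ⟨w, rfl⟩
      show Lop w q ∈ _
      by_cases hw : w = 1
      · rw [hw, Lop_one]
        exact Submodule.mem_sup_right (Submodule.mem_span_singleton_self q)
      · exact Submodule.mem_sup_left (Submodule.subset_span ⟨w, hw, rfl⟩)
    · exact sup_le (Qplus_le_Qspan q) ((Submodule.span_singleton_le_iff_mem q _).2 (self_mem_Qspan q))
  have hinf : Qplus q ⊓ (K ∙ q) = ⊥ := by
    rw [Submodule.eq_bot_iff]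
    rintro x ⟨hx1, hx2⟩
    obtain ⟨c, rfl⟩ := Submodule.mem_span_singleton.1 hx2
    rcases eq_or_ne c 0 with rfl | hc
    · rw [zero_smul]
    · exfalso
      refine self_not_mem_Qplus hq ?_
      have := Submodule.smul_mem (Qplus q) c⁻¹ hx1
      rwa [smul_smul, inv_mul_cancel₀ hc, one_smul] at this
  have := Submodule.finrank_sup_add_finrank_inf_eq (Qplus q) (K ∙ q)
  rw [hinf, finrank_span_singleton hq] at this
  rw [hrank, hsup]
  simpa using this

theorem hrank_mul {p q : MA K X} (hp : p ≠ 0) (hq : q ≠ 0) :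
    hrank (p * q) + 1 = hrank p + hrank q := by
  classical
  set π := (Qplus q).mkQ with hπ
  set Φ := LinearMap.mulRight K q with hΦ
  set W := Qspan (p * q) with hW
  set ρ : W →ₗ[K] (MA K X ⧸ Qplus q) := π.comp W.subtype with hρ
  have hker : LinearMap.ker ρ = Submodule.comap W.subtype (Qplus q) := by
    ext x
    simp only [hρ, LinearMap.mem_ker, LinearMap.comp_apply, Submodule.mkQ_apply,
      Submodule.Quotient.mk_eq_zero, Submodule.mem_comap, Submodule.subtype_apply, hπ]
  have hkerrank : Module.finrank K (LinearMap.ker ρ) = Module.finrank K (Qplus q) := by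
    rw [hker]
    exact LinearEquiv.finrank_eq (Submodule.comapSubtypeEquivOfLe (Qplus_le_Qspan_mul hp))
  have hrange : LinearMap.range ρ = (Qspan p).map (π ∘ₗ Φ) := by
    have h1 : LinearMap.range ρ = (Qspan (p*q)).map π := by
      rw [hρ, LinearMap.range_comp, Submodule.range_subtype]
    rw [h1]
    refine le_antisymm ?_ ?_
    · have h2 := Submodule.map_mono (f := π) (Qspan_mul_le p q)
      rw [Submodule.map_sup] at h2
      have h3 : (Qplus q).map π = ⊥ := by
        rw [Submodule.eq_bot_iff]
        rintro x ⟨y, hy, rfl⟩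
        rw [hπ, Submodule.mkQ_apply, Submodule.Quotient.mk_eq_zero]
        exact hy
      rw [h3, sup_bot_eq, ← Submodule.map_comp] at h2
      exact h2
    · rw [Qspan, Submodule.map_span, Submodule.span_le]
      rintro - ⟨-, ⟨u, rfl⟩, rfl⟩
      refine ⟨Lop u (p * q), Lop_mem_Qspan _ _, ?_⟩
      rw [LinearMap.comp_apply, hΦ, LinearMap.mulRight_apply]
      have hdec : Lop u (p * q) = (Lop u p) * q + rem p q u := by rw [rem]; abel
      rw [hπ, Submodule.mkQ_apply, Submodule.mkQ_apply, hdec]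
      rw [Submodule.Quotient.mk_add]
      rw [(Submodule.Quotient.mk_eq_zero _).2 (rem_mem_Qplus p q u), add_zero]
  have hrangerank : Module.finrank K (LinearMap.range ρ) = hrank p := by
    rw [hrange, hrank]
    exact (LinearEquiv.finrank_eq
      (Submodule.equivMapOfInjective (π ∘ₗ Φ) (pi_comp_injective hq) (Qspan p))).symm
  have hsum := LinearMap.finrank_range_add_finrank_ker ρ
  rw [hrangerank, hkerrank] at hsum
  have hq1 := hrank_eq_Qplus_add_one hq
  have hWr : hrank (p * q) = Module.finrank K W := rfl
  omega

/-! ### Admissible linear systems over the monoid algebra -/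

def IsPencil' {n : ℕ} (A : Matrix (Fin n) (Fin n) (MA K X)) : Prop :=
  ∃ (A0 : Matrix (Fin n) (Fin n) K) (Ax : X → Matrix (Fin n) (Fin n) K),
    ∀ i j, A i j = single 1 (A0 i j) + ∑ ℓ : X, single (FreeMonoid.of ℓ) (Ax ℓ i j)

def HasALS' (f : MA K X) (n : ℕ) : Prop :=
  ∃ (hn : 0 < n) (A B : Matrix (Fin n) (Fin n) (MA K X)) (v : Fin n → K),
    IsPencil' A ∧ A * B = 1 ∧ B * A = 1 ∧
    f = ∑ j, B ⟨0, hn⟩ j * single 1 (v j)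

lemma single_one_mul (c : K) (h : MA K X) : (single 1 c : MA K X) * h = c • h := by
  have h1 : (single 1 c : MA K X) = c • (1 : MA K X) := by
    rw [MonoidAlgebra.one_def, MonoidAlgebra.smul_single, smul_eq_mul, mul_one]
  rw [h1, smul_mul_assoc, one_mul]

lemma MAsingle_sum {ι : Type*} (s : Finset ι) (F : ι → K) (w : FreeMonoid X) :
    (single w (∑ c ∈ s, F c) : MA K X) = ∑ c ∈ s, single w (F c) :=
  map_sum (MonoidAlgebra.singleAddHom w) F s

lemma MAsingle_neg (w : FreeMonoid X) (c : K) : (single w (-c) : MA K X) = -single w c := by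
  ext t
  rw [MonoidAlgebra.coeff_single_apply, MonoidAlgebra.coeff_neg, Finsupp.neg_apply, MonoidAlgebra.coeff_single_apply]
  split <;> simp

lemma single_smul_decomp (w : FreeMonoid X) (c : K) :
    (single w c : MA K X) = c • single w 1 := by
  rw [MonoidAlgebra.smul_single, smul_eq_mul, mul_one]

lemma Lop_of_single_one (ℓ : X) (c : K) :
    Lop (FreeMonoid.of ℓ) (single (1 : FreeMonoid X) c : MA K X) = 0 :=
  Lop_single_of_ne _ _ _ (fun t => one_ne_of_mul ℓ t)

lemma Lop_of_single_of (ℓ ℓ' : X) (c : K) :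
    Lop (FreeMonoid.of ℓ) (single (FreeMonoid.of ℓ') c : MA K X)
      = if ℓ' = ℓ then single 1 c else 0 := by
  by_cases h : ℓ' = ℓ
  · subst h
    rw [if_pos rfl]
    have := Lop_single_mul (K := K) (FreeMonoid.of ℓ') 1 c
    rwa [mul_one] at this
  · rw [if_neg h]
    refine Lop_single_of_ne _ _ _ ?_
    intro t hc
    have h2 := of_mul_inj (show FreeMonoid.of ℓ' * 1 = FreeMonoid.of ℓ * t by
      rw [mul_one]; exact hc)
    exact h h2.1

/-- Lemma A : any ALS of dimension `n` bounds the Hankel rank. -/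
theorem hrank_le_of_HasALS {f : MA K X} {n : ℕ} (h : HasALS' f n) : hrank f ≤ n := by
  classical
  obtain ⟨hn, A, B, v, ⟨A0, Ax, hpencil⟩, hAB, hBA, hf⟩ := h
  set g : Fin n → MA K X := fun i => ∑ j, B i j * single 1 (v j) with hg
  -- constant terms
  set B0 : Matrix (Fin n) (Fin n) K := fun i j => (B i j) 1 with hB0
  have hA1 : ∀ i j, (A i j) 1 = A0 i j := by
    intro i j
    rw [hpencil i j, MonoidAlgebra.coeff_add, Finsupp.add_apply, MonoidAlgebra.coeff_single_apply, if_pos rfl,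
      MonoidAlgebra.coeff_sum, Finset.sum_apply']
    have : ∀ ℓ ∈ Finset.univ, (single (FreeMonoid.of ℓ) (Ax ℓ i j) : MA K X) 1 = 0 := by
      intro ℓ _
      rw [MonoidAlgebra.coeff_single_apply, if_neg (fun hc => one_ne_of_mul ℓ 1 (by rw [hc, mul_one]))]
    rw [Finset.sum_congr rfl this, Finset.sum_const_zero, add_zero]
  have hB0A0 : B0 * A0 = 1 := by
    ext i j
    have h1 : (∑ k, B i k * A k j) 1 = ((1 : Matrix (Fin n) (Fin n) (MA K X)) i j) 1 := by
      rw [← Matrix.mul_apply, hBA]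
    rw [MonoidAlgebra.coeff_sum, Finset.sum_apply'] at h1
    have h2 : ∀ k ∈ Finset.univ, (B i k * A k j) 1 = B0 i k * A0 k j := by
      intro k _
      rw [coeff_one_mul, hA1]
    rw [Finset.sum_congr rfl h2] at h1
    rw [Matrix.mul_apply, Matrix.one_apply]
    rw [Matrix.one_apply] at h1
    by_cases hij : i = j
    · rw [if_pos hij] at h1 ⊢
      rw [h1, MonoidAlgebra.one_def, MonoidAlgebra.coeff_single_apply, if_pos rfl]
    · rw [if_neg hij] at h1 ⊢
      rw [h1]
      rfl
  -- the linear system relation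
  have hrel : ∀ i, ∑ j, A i j * g j = single 1 (v i) := by
    intro i
    calc ∑ j, A i j * g j
        = ∑ j, ∑ k, A i j * (B j k * single 1 (v k)) := by
          refine Finset.sum_congr rfl fun j _ => ?_
          rw [hg, Finset.mul_sum]
      _ = ∑ k, (∑ j, A i j * B j k) * single 1 (v k) := by
          rw [Finset.sum_comm]
          refine Finset.sum_congr rfl fun k _ => ?_
          rw [Finset.sum_mul]
          exact Finset.sum_congr rfl fun j _ => (mul_assoc _ _ _).symm
      _ = ∑ k, ((1 : Matrix (Fin n) (Fin n) (MA K X)) i k) * single 1 (v k) := by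
          refine Finset.sum_congr rfl fun k _ => ?_
          rw [← Matrix.mul_apply, hAB]
      _ = single 1 (v i) := by
          rw [Finset.sum_eq_single i]
          · rw [Matrix.one_apply_eq, one_mul]
          · intro k _ hk
            rw [Matrix.one_apply_ne (Ne.symm hk), zero_mul]
          · intro hi; exact absurd (Finset.mem_univ i) hi
  have hLop : ∀ (ℓ0 : X) i, ∑ j, (A0 i j) • Lop (FreeMonoid.of ℓ0) (g j)
      = - ∑ j, (Ax ℓ0 i j) • g j := by
    intro ℓ0 i
    have h0 := congrArg (Lop (FreeMonoid.of ℓ0)) (hrel i)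
    rw [Lop_of_single_one, map_sum] at h0
    have hterm : ∀ j ∈ Finset.univ, Lop (FreeMonoid.of ℓ0) (A i j * g j)
        = (Ax ℓ0 i j) • g j + (A0 i j) • Lop (FreeMonoid.of ℓ0) (g j) := by
      intro j _
      rw [key1, hA1]
      congr 1
      rw [hpencil i j, map_add, map_sum, Lop_of_single_one, zero_add]
      have h5 : ∀ ℓ ∈ Finset.univ,
          Lop (FreeMonoid.of ℓ0) (single (FreeMonoid.of ℓ) (Ax ℓ i j) : MA K X)
            = if ℓ = ℓ0 then single 1 (Ax ℓ i j) else 0 := fun ℓ _ => Lop_of_single_of ℓ0 ℓ _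
      rw [Finset.sum_congr rfl h5, Finset.sum_ite_eq' Finset.univ ℓ0
        (fun ℓ => (single 1 (Ax ℓ i j) : MA K X)), if_pos (Finset.mem_univ ℓ0),
        single_one_mul]
    rw [Finset.sum_congr rfl hterm, Finset.sum_add_distrib] at h0
    exact eq_neg_of_add_eq_zero_right h0
  have hLopg : ∀ (ℓ0 : X) k, Lop (FreeMonoid.of ℓ0) (g k)
      = - ∑ i, ∑ j, (B0 k i * Ax ℓ0 i j) • g j := by
    intro ℓ0 k
    have h2 : ∑ i, B0 k i • (∑ j, A0 i j • Lop (FreeMonoid.of ℓ0) (g j))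
        = Lop (FreeMonoid.of ℓ0) (g k) := by
      calc ∑ i, B0 k i • (∑ j, A0 i j • Lop (FreeMonoid.of ℓ0) (g j))
          = ∑ j, ((B0 * A0) k j) • Lop (FreeMonoid.of ℓ0) (g j) := by
            simp_rw [Finset.smul_sum, smul_smul]
            rw [Finset.sum_comm]
            refine Finset.sum_congr rfl fun j _ => ?_
            rw [Matrix.mul_apply, Finset.sum_smul]
        _ = _ := by
            rw [hB0A0]
            rw [Finset.sum_eq_single k]
            · rw [Matrix.one_apply_eq, one_smul]
            · intro j _ hj
              rw [Matrix.one_apply_ne (Ne.symm hj), zero_smul]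
            · intro hk; exact absurd (Finset.mem_univ k) hk
    rw [← h2, Finset.sum_congr rfl (fun i (_ : i ∈ Finset.univ) => by rw [hLop ℓ0 i])]
    simp_rw [smul_neg, Finset.smul_sum, smul_smul]
    rw [← Finset.sum_neg_distrib]
  set G := Submodule.span K (Set.range g) with hG
  have hstep : ∀ x ∈ G, ∀ ℓ0 : X, Lop (FreeMonoid.of ℓ0) x ∈ G := by
    intro x hx ℓ0
    refine Submodule.span_induction ?_ ?_ ?_ ?_ hx
    · rintro - ⟨k, rfl⟩
      rw [hLopg ℓ0 k]
      exact Submodule.neg_mem _ (Submodule.sum_mem _ fun i _ => Submodule.sum_mem _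
        fun j _ => Submodule.smul_mem _ _ (Submodule.subset_span ⟨j, rfl⟩))
    · rw [map_zero]; exact Submodule.zero_mem _
    · intro a b _ _ ha hb; rw [map_add]; exact Submodule.add_mem _ ha hb
    · intro c a _ ha; rw [map_smul]; exact Submodule.smul_mem _ _ ha
  have hall : ∀ (w : List X), ∀ x ∈ G, Lop (fm w) x ∈ G := by
    intro w
    induction w with
    | nil => intro x hx; rw [show fm ([] : List X) = 1 from rfl, Lop_one]; exact hx
    | cons ℓ w' ih =>
      intro x hx
      rw [show fm (ℓ :: w') = FreeMonoid.of ℓ * fm w' from rfl, Lop_mul]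
      exact ih _ (hstep x hx ℓ)
  have hQle : Qspan f ≤ G := by
    refine Submodule.span_le.2 ?_
    rintro - ⟨w, rfl⟩
    show Lop w f ∈ G
    have hfg : f = g ⟨0, hn⟩ := hf
    rw [hfg]
    exact hall w _ (Submodule.subset_span ⟨_, rfl⟩)
  haveI : FiniteDimensional K G := FiniteDimensional.span_of_finite K (Set.finite_range g)
  have h1 : hrank f ≤ Module.finrank K G := Submodule.finrank_mono hQle
  have h2 : Module.finrank K G ≤ n := by
    refine le_trans (finrank_span_le_card (R := K) (Set.range g)) ?_
    rw [Set.toFinset_range]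
    exact le_trans Finset.card_image_le (by simp)
  omega

/-! ### Construction of a minimal ALS -/

lemma Lop_long_zero_on_Qspan {f : MA K X} {x : MA K X} (hx : x ∈ Qspan f)
    (w : FreeMonoid X) (hw : deg f < w.length) : Lop w x = 0 := by
  refine Submodule.span_induction ?_ ?_ ?_ ?_ hx
  · rintro - ⟨u, rfl⟩
    rw [← Lop_mul]
    refine Lop_eq_zero_of_deg_lt ?_
    rw [FreeMonoid.length_mul]
    omega
  · rw [map_zero]
  · intro a c _ _ ha hc; rw [map_add, ha, hc, add_zero]
  · intro c a _ ha; rw [map_smul, ha, smul_zero]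

noncomputable def SL (f : MA K X) (ℓ : X) : Qspan f →ₗ[K] Qspan f :=
  (Lop (FreeMonoid.of ℓ)).restrict (fun _ hx => Lop_maps_Qspan f (FreeMonoid.of ℓ) hx)

lemma SL_coe (f : MA K X) (ℓ : X) (x : Qspan f) :
    (↑(SL f ℓ x) : MA K X) = Lop (FreeMonoid.of ℓ) ↑x := rfl

noncomputable def SSL (f : MA K X) : List X → (Qspan f →ₗ[K] Qspan f)
  | [] => LinearMap.id
  | ℓ :: w => (SSL f w) ∘ₗ SL f ℓ

lemma SSL_coe (f : MA K X) : ∀ (w : List X) (x : Qspan f),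
    (↑(SSL f w x) : MA K X) = Lop (fm w) ↑x := by
  intro w
  induction w with
  | nil => intro x; rw [show fm ([] : List X) = 1 from rfl, Lop_one]; rfl
  | cons ℓ w' ih =>
    intro x
    show (↑(SSL f w' (SL f ℓ x)) : MA K X) = _
    rw [ih (SL f ℓ x), SL_coe, ← Lop_mul]
    rfl

lemma SSL_zero (f : MA K X) (w : List X) (hw : deg f < w.length) : SSL f w = 0 := by
  refine LinearMap.ext fun x => ?_
  refine Subtype.ext ?_
  rw [SSL_coe]
  exact Lop_long_zero_on_Qspan x.2 (fm w) hw

theorem HasALS'_of_ne_zero {f : MA K X} (hf : f ≠ 0) : HasALS' f (hrank f) := by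
  classical
  have hfV : f ∈ Qspan f := self_mem_Qspan f
  set phat : Qspan f := ⟨f, hfV⟩ with hphat
  have hpne : phat ≠ 0 := by
    intro hc
    exact hf (congrArg Subtype.val hc)
  haveI : Nontrivial (Qspan f) := nontrivial_of_ne phat 0 hpne
  set r := hrank f with hrdef
  have hr : 0 < r := Module.finrank_pos
  -- basis with first vector `f`
  have li : LinearIndepOn K id ({phat} : Set (Qspan f)) :=
    (linearIndepOn_singleton_iff K).2 hpne
  set b' : Module.Basis _ K (Qspan f) := Module.Basis.extend li with hb'
  haveI : Fintype (li.extend (Set.subset_univ _)) := FiniteDimensional.fintypeBasisIndex b'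
  have hcard : Fintype.card (li.extend (Set.subset_univ _)) = r :=
    (Module.finrank_eq_card_basis b').symm
  have hmem : phat ∈ li.extend (Set.subset_univ _) := Module.Basis.subset_extend li rfl
  set e := Fintype.equivFinOfCardEq hcard with he
  set σ := e.trans (Equiv.swap (e ⟨phat, hmem⟩) (⟨0, hr⟩ : Fin r)) with hσ
  set b := b'.reindex σ with hb
  have hb0 : b ⟨0, hr⟩ = phat := by
    rw [hb, Module.Basis.reindex_apply, hσ, Equiv.symm_trans_apply, Equiv.symm_swap,
      Equiv.swap_apply_right, Equiv.symm_apply_apply, hb', Module.Basis.extend_apply_self]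
  -- matrices
  set M : X → Matrix (Fin r) (Fin r) K := fun ℓ => LinearMap.toMatrix b b (SL f ℓ) with hM
  set TM : List X → Matrix (Fin r) (Fin r) K := fun w => LinearMap.toMatrix b b (SSL f w) with hTM
  set N : Matrix (Fin r) (Fin r) (MA K X) :=
    Matrix.of (fun i j => ∑ ℓ : X, single (FreeMonoid.of ℓ) ((M ℓ) j i)) with hN
  set A : Matrix (Fin r) (Fin r) (MA K X) := 1 - N with hA
  set BB : Matrix (Fin r) (Fin r) (MA K X) := ∑ k ∈ Finset.range (deg f + 1), N ^ k with hBB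
  -- power expansion
  have hNpow : ∀ k : ℕ, N ^ k = Matrix.of (fun i j =>
      ∑ t : Fin k → X, single (fm (List.ofFn t)) ((TM (List.ofFn t)) j i)) := by
    intro k
    induction k with
    | zero =>
      refine Matrix.ext fun i j => ?_
      rw [pow_zero, Matrix.of_apply, Fintype.sum_unique, List.ofFn_zero]
      have h1 : TM [] = 1 := by rw [hTM]; exact LinearMap.toMatrix_id b
      rw [h1, Matrix.one_apply, Matrix.one_apply]
      by_cases hij : i = j
      · subst hij
        rw [if_pos rfl, if_pos rfl, MonoidAlgebra.one_def]
        rfl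
      · rw [if_neg hij, if_neg (Ne.symm hij), MonoidAlgebra.single_zero]
    | succ k ih =>
      refine Matrix.ext fun i j => ?_
      rw [pow_succ', Matrix.mul_apply]
      have hterm : ∀ c ∈ Finset.univ, N i c * (N ^ k) c j
          = ∑ ℓ : X, ∑ t : Fin k → X,
              single (FreeMonoid.of ℓ * fm (List.ofFn t))
                ((M ℓ) c i * (TM (List.ofFn t)) j c) := by
        intro c _
        rw [ih]
        show (∑ ℓ : X, single (FreeMonoid.of ℓ) ((M ℓ) c i)) * _ = _
        rw [Matrix.of_apply, Finset.sum_mul]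
        refine Finset.sum_congr rfl fun ℓ _ => ?_
        rw [Finset.mul_sum]
        refine Finset.sum_congr rfl fun t _ => ?_
        rw [MonoidAlgebra.single_mul_single]
      rw [Finset.sum_congr rfl hterm, Finset.sum_comm]
      have hswap : ∀ ℓ ∈ Finset.univ, (∑ c : Fin r, ∑ t : Fin k → X,
          single (FreeMonoid.of ℓ * fm (List.ofFn t)) ((M ℓ) c i * (TM (List.ofFn t)) j c))
          = ∑ t : Fin k → X,
              single (FreeMonoid.of ℓ * fm (List.ofFn t)) (((TM (List.ofFn t)) * (M ℓ)) j i) := by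
        intro ℓ _
        rw [Finset.sum_comm]
        refine Finset.sum_congr rfl fun t _ => ?_
        rw [Matrix.mul_apply, MAsingle_sum]
        refine Finset.sum_congr rfl fun c _ => ?_
        rw [mul_comm]
      rw [Finset.sum_congr rfl hswap]
      conv_rhs => rw [Matrix.of_apply]
      have hprod : (∑ p : X × (Fin k → X),
          (single (FreeMonoid.of p.1 * fm (List.ofFn p.2))
            (((TM (List.ofFn p.2)) * (M p.1)) j i) : MA K X))
          = ∑ t : Fin (k+1) → X, single (fm (List.ofFn t)) ((TM (List.ofFn t)) j i) := by
        refine Fintype.sum_equiv (Fin.consEquiv (fun _ => X)) _ _ ?_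
        rintro ⟨ℓ, t⟩
        have hofn : List.ofFn (Fin.cons ℓ t : Fin (k+1) → X) = ℓ :: List.ofFn t := by
          simp [List.ofFn_succ]
        have hce : ((Fin.consEquiv (fun _ => X)) (ℓ, t) : Fin (k+1) → X) = Fin.cons ℓ t := rfl
        rw [hce, hofn]
        have hTMc : TM (ℓ :: List.ofFn t) = TM (List.ofFn t) * M ℓ := by
          rw [hTM]
          show LinearMap.toMatrix b b (SSL f (ℓ :: List.ofFn t)) = _
          rw [show SSL f (ℓ :: List.ofFn t) = SSL f (List.ofFn t) ∘ₗ SL f ℓ from rfl,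
            LinearMap.toMatrix_comp b b b]
        rw [hTMc]
        rfl
      rw [← hprod]
      exact (Fintype.sum_prod_type (fun p : X × (Fin k → X) =>
        (single (FreeMonoid.of p.1 * fm (List.ofFn p.2))
          (((TM (List.ofFn p.2)) * (M p.1)) j i) : MA K X))).symm
  have hN0 : N ^ (deg f + 1) = 0 := by
    rw [hNpow]
    refine Matrix.ext fun i j => ?_
    rw [Matrix.of_apply, Matrix.zero_apply]
    refine Finset.sum_eq_zero fun t _ => ?_
    have h1 : SSL f (List.ofFn t) = 0 := SSL_zero f _ (by rw [List.length_ofFn]; omega)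
    have h2 : TM (List.ofFn t) = 0 := by
      rw [hTM]
      show LinearMap.toMatrix b b _ = 0
      rw [h1]
      exact (LinearMap.toMatrix b b).map_zero
    rw [h2, Matrix.zero_apply, MonoidAlgebra.single_zero]
  have hcomm : N * BB = BB * N := by
    rw [hBB, Finset.mul_sum, Finset.sum_mul]
    exact Finset.sum_congr rfl fun k _ => ((Commute.refl N).pow_right k).eq
  have hkey : BB - BB * N = 1 := by
    have h := geom_sum_mul N (deg f + 1)
    rw [hN0, zero_sub, ← hBB] at h
    rw [mul_sub, mul_one] at h
    rw [← neg_sub (BB * N) BB, h, neg_neg]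
  have hBA2 : BB * A = 1 := by rw [hA, mul_sub, mul_one]; exact hkey
  have hAB2 : A * BB = 1 := by rw [hA, sub_mul, one_mul, hcomm]; exact hkey
  have hpen : IsPencil' A := by
    refine ⟨1, fun ℓ => Matrix.of fun i j => -((M ℓ) j i), fun i j => ?_⟩
    rw [hA, Matrix.sub_apply]
    have hNij : N i j = ∑ ℓ : X, single (FreeMonoid.of ℓ) ((M ℓ) j i) := rfl
    rw [hNij, sub_eq_add_neg, ← Finset.sum_neg_distrib]
    congr 1
    · by_cases hij : i = j
      · subst hij
        rw [Matrix.one_apply_eq, Matrix.one_apply_eq, MonoidAlgebra.one_def]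
      · rw [Matrix.one_apply_ne hij, Matrix.one_apply_ne hij, MonoidAlgebra.single_zero]
    · refine Finset.sum_congr rfl fun ℓ _ => ?_
      show -single (FreeMonoid.of ℓ) ((M ℓ) j i) = single (FreeMonoid.of ℓ) (-((M ℓ) j i))
      rw [MAsingle_neg]
  -- the linear system
  set hvec : Fin r → MA K X := fun j => ↑(b j) with hhvec
  have hSLrepr : ∀ (ℓ : X) (i : Fin r), (↑(SL f ℓ (b i)) : MA K X) = ∑ j, (M ℓ) j i • hvec j := by
    intro ℓ i
    have h1 := Module.Basis.sum_repr b (SL f ℓ (b i))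
    have h2 := congrArg (Submodule.subtype (Qspan f)) h1
    rw [map_sum] at h2
    have h3 : ∀ j ∈ Finset.univ, (Submodule.subtype (Qspan f)) ((b.repr (SL f ℓ (b i))) j • b j)
        = (M ℓ) j i • hvec j := by
      intro j _
      rw [map_smul]
      congr 1
      rw [hM]
      show _ = (LinearMap.toMatrix b b (SL f ℓ)) j i
      rw [LinearMap.toMatrix_apply]
    rw [Finset.sum_congr rfl h3] at h2
    exact h2.symm
  have hsys : ∀ i, ∑ j, A i j * hvec j = single 1 (hvec i 1) := by
    intro i
    have hsplit : ∀ j ∈ Finset.univ, A i j * hvec j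
        = ((1 : Matrix (Fin r) (Fin r) (MA K X)) i j) * hvec j
          - ∑ ℓ : X, single (FreeMonoid.of ℓ) ((M ℓ) j i) * hvec j := by
      intro j _
      rw [hA, Matrix.sub_apply, sub_mul]
      congr 1
      rw [show N i j = ∑ ℓ : X, single (FreeMonoid.of ℓ) ((M ℓ) j i) from rfl, Finset.sum_mul]
    rw [Finset.sum_congr rfl hsplit, Finset.sum_sub_distrib]
    have h1 : ∑ j, ((1 : Matrix (Fin r) (Fin r) (MA K X)) i j) * hvec j = hvec i := by
      rw [Finset.sum_eq_single i]
      · rw [Matrix.one_apply_eq, one_mul]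
      · intro j _ hj; rw [Matrix.one_apply_ne (Ne.symm hj), zero_mul]
      · intro h; exact absurd (Finset.mem_univ i) h
    have h2 : ∑ j, ∑ ℓ : X, single (FreeMonoid.of ℓ) ((M ℓ) j i) * hvec j
        = ∑ ℓ : X, (single (FreeMonoid.of ℓ) 1 : MA K X) * Lop (FreeMonoid.of ℓ) (hvec i) := by
      rw [Finset.sum_comm]
      refine Finset.sum_congr rfl fun ℓ _ => ?_
      have h3 : ∀ j ∈ Finset.univ, single (FreeMonoid.of ℓ) ((M ℓ) j i) * hvec j
          = (single (FreeMonoid.of ℓ) 1 : MA K X) * ((M ℓ) j i • hvec j) := by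
        intro j _
        rw [single_smul_decomp, smul_mul_assoc, mul_smul_comm]
      rw [Finset.sum_congr rfl h3, ← Finset.mul_sum, ← hSLrepr ℓ i, SL_coe]
    rw [h1, h2, sub_eq_iff_eq_add]
    exact key2 (hvec i)
  set v : Fin r → K := fun i => hvec i 1 with hv
  have hrow : ∀ i, ∑ j, BB i j * single 1 (v j) = hvec i := by
    intro i
    calc ∑ j, BB i j * single 1 (v j)
        = ∑ j, ∑ k, BB i j * (A j k * hvec k) := by
          refine Finset.sum_congr rfl fun j _ => ?_
          rw [show (single 1 (v j) : MA K X) = ∑ k, A j k * hvec k from (hsys j).symm,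
            Finset.mul_sum]
      _ = ∑ k, (∑ j, BB i j * A j k) * hvec k := by
          rw [Finset.sum_comm]
          refine Finset.sum_congr rfl fun k _ => ?_
          rw [Finset.sum_mul]
          exact Finset.sum_congr rfl fun j _ => (mul_assoc _ _ _).symm
      _ = ∑ k, ((1 : Matrix (Fin r) (Fin r) (MA K X)) i k) * hvec k := by
          refine Finset.sum_congr rfl fun k _ => ?_
          rw [← Matrix.mul_apply, hBA2]
      _ = hvec i := by
          rw [Finset.sum_eq_single i]
          · rw [Matrix.one_apply_eq, one_mul]
          · intro k _ hk; rw [Matrix.one_apply_ne (Ne.symm hk), zero_mul]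
          · intro h; exact absurd (Finset.mem_univ i) h
  refine ⟨hr, A, BB, v, hpen, hAB2, hBA2, ?_⟩
  rw [hrow ⟨0, hr⟩, hhvec]
  show f = ↑(b ⟨0, hr⟩)
  rw [hb0]

end ALSProof

/-- A matrix over `K⟨X⟩` is a linear pencil `A₀ ⊗ 1 + Σℓ Aℓ ⊗ xℓ`. -/
def Matrix.IsLinearPencil {K : Type*} [Field K] {X : Type*} [Fintype X] {n : ℕ}
    (A : Matrix (Fin n) (Fin n) (FreeAlgebra K X)) : Prop :=
  ∃ (A₀ : Matrix (Fin n) (Fin n) K) (Ax : X → Matrix (Fin n) (Fin n) K),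
    ∀ i j, A i j = algebraMap K (FreeAlgebra K X) (A₀ i j) +
      ∑ ℓ : X, Ax ℓ i j • ι K ℓ

/-- `p` admits an admissible linear system of dimension `n`: a full (here:
invertible) linear pencil `A` and `v ∈ Kⁿ` with `p = (A⁻¹ v)₁ = e₁ A⁻¹ v`. -/
def HasALS {K : Type*} [Field K] {X : Type*} [Fintype X]
    (p : FreeAlgebra K X) (n : ℕ) : Prop :=
  ∃ (hn : 0 < n) (A B : Matrix (Fin n) (Fin n) (FreeAlgebra K X)) (v : Fin n → K),
    A.IsLinearPencil ∧ A * B = 1 ∧ B * A = 1 ∧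
    p = ∑ j, B ⟨0, hn⟩ j * algebraMap K (FreeAlgebra K X) (v j)

/-- The rank of `p`: the minimal dimension of an admissible linear system. -/
noncomputable def alsRank {K : Type*} [Field K] {X : Type*} [Fintype X]
    (p : FreeAlgebra K X) : ℕ :=
  sInf {n | HasALS p n}

namespace ALSProof

variable {K : Type*} [Field K] {X : Type*} [Fintype X]

open MonoidAlgebra

noncomputable def τ : FreeAlgebra K X ≃ₐ[K] MA K X :=
  FreeAlgebra.equivMonoidAlgebraFreeMonoid

lemma tau_iota (ℓ : X) : (τ (ι K ℓ) : MA K X) = single (FreeMonoid.of ℓ) 1 := by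
  simp [τ, FreeAlgebra.equivMonoidAlgebraFreeMonoid]

lemma tau_algebraMap (c : K) : (τ (algebraMap K (FreeAlgebra K X) c) : MA K X) = single 1 c := by
  rw [AlgEquiv.commutes]
  rfl

lemma tau_symm_single_one (c : K) :
    (τ.symm (single 1 c : MA K X) : FreeAlgebra K X) = algebraMap K (FreeAlgebra K X) c := by
  rw [show (single 1 c : MA K X) = algebraMap K (MA K X) c from rfl, AlgEquiv.commutes]

lemma tau_symm_single_of (ℓ : X) (c : K) :
    (τ.symm (single (FreeMonoid.of ℓ) c : MA K X) : FreeAlgebra K X) = c • ι K ℓ := by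
  rw [single_smul_decomp, map_smul, ← tau_iota ℓ, AlgEquiv.symm_apply_apply]

lemma HasALS_iff (p : FreeAlgebra K X) (n : ℕ) : HasALS p n ↔ HasALS' (τ p) n := by
  constructor
  · rintro ⟨hn, A, B, v, ⟨A0, Ax, hpen⟩, hAB, hBA, hsum⟩
    set φ : FreeAlgebra K X →+* MA K X := (τ.toAlgHom.toRingHom : FreeAlgebra K X →+* MA K X) with hφ
    refine ⟨hn, A.map φ, B.map φ, v, ⟨A0, Ax, ?_⟩, ?_, ?_, ?_⟩
    · intro i j
      show φ (A i j) = _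
      rw [hpen i j]
      have : (τ : FreeAlgebra K X → MA K X) = φ := rfl
      rw [hφ]
      show (τ : FreeAlgebra K X ≃ₐ[K] MA K X)
        (algebraMap K (FreeAlgebra K X) (A0 i j) + ∑ ℓ : X, Ax ℓ i j • ι K ℓ) = _
      rw [map_add, map_sum, tau_algebraMap]
      congr 1
      refine Finset.sum_congr rfl fun ℓ _ => ?_
      rw [map_smul, tau_iota, ← single_smul_decomp]
    · rw [← Matrix.map_mul, hAB]
      exact Matrix.map_one _ (map_zero φ) (map_one φ)
    · rw [← Matrix.map_mul, hBA]
      exact Matrix.map_one _ (map_zero φ) (map_one φ)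
    · rw [hsum, map_sum]
      refine Finset.sum_congr rfl fun j _ => ?_
      show (τ : FreeAlgebra K X ≃ₐ[K] MA K X) _ = _
      rw [map_mul, tau_algebraMap]
      rfl
  · rintro ⟨hn, A, B, v, ⟨A0, Ax, hpen⟩, hAB, hBA, hsum⟩
    set ψ : MA K X →+* FreeAlgebra K X := (τ.symm.toAlgHom.toRingHom : MA K X →+* FreeAlgebra K X) with hψ
    refine ⟨hn, A.map ψ, B.map ψ, v, ⟨A0, Ax, ?_⟩, ?_, ?_, ?_⟩
    · intro i j
      show ψ (A i j) = _
      rw [hpen i j, hψ]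
      show (τ.symm : MA K X ≃ₐ[K] FreeAlgebra K X)
        (single 1 (A0 i j) + ∑ ℓ : X, single (FreeMonoid.of ℓ) (Ax ℓ i j)) = _
      rw [map_add, map_sum, tau_symm_single_one]
      congr 1
      exact Finset.sum_congr rfl fun ℓ _ => tau_symm_single_of ℓ _
    · rw [← Matrix.map_mul, hAB]
      exact Matrix.map_one _ (map_zero ψ) (map_one ψ)
    · rw [← Matrix.map_mul, hBA]
      exact Matrix.map_one _ (map_zero ψ) (map_one ψ)
    · have := congrArg (τ.symm : MA K X ≃ₐ[K] FreeAlgebra K X) hsum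
      rw [AlgEquiv.symm_apply_apply, map_sum] at this
      rw [this]
      refine Finset.sum_congr rfl fun j _ => ?_
      rw [map_mul, tau_symm_single_one]
      rfl

lemma tau_ne_zero {g : FreeAlgebra K X} (hg : g ≠ 0) : (τ g : MA K X) ≠ 0 := by
  intro hc
  exact hg (by simpa using congrArg τ.symm hc)

lemma alsRank_eq_hrank {g : FreeAlgebra K X} (hg : g ≠ 0) :
    alsRank g = hrank (τ g) ∧ HasALS g (hrank (τ g)) := by
  have hmem : HasALS g (hrank (τ g)) :=
    (HasALS_iff g _).2 (HasALS'_of_ne_zero (tau_ne_zero hg))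
  refine ⟨le_antisymm (Nat.sInf_le hmem) (le_csInf ⟨_, hmem⟩ fun n hn => ?_), hmem⟩
  exact hrank_le_of_HasALS ((HasALS_iff g n).1 hn)

end ALSProof
open ALSProof in
/-- Minimal polynomial multiplication: if `p, q ≠ 0` have minimal admissible
linear systems of dimensions `n_p, n_q ≥ 2`, then `pq` has a minimal ALS of
dimension `n_p + n_q − 1`, i.e. `rank(pq) = rank(p) + rank(q) − 1`. -/
theorem alsRank_mul {K : Type*} [Field K] {X : Type*} [Fintype X]
    (p q : FreeAlgebra K X) (hp : p ≠ 0) (hq : q ≠ 0)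
    (np nq : ℕ) (hnp : 2 ≤ np) (hnq : 2 ≤ nq)
    (hpALS : HasALS p np) (hpmin : alsRank p = np)
    (hqALS : HasALS q nq) (hqmin : alsRank q = nq) :
    HasALS (p * q) (np + nq - 1) ∧ alsRank (p * q) = np + nq - 1 := by
  obtain ⟨hp1, _⟩ := alsRank_eq_hrank hp
  obtain ⟨hq1, _⟩ := alsRank_eq_hrank hq
  have hpq : (τ (p * q) : MA K X) = τ p * τ q := map_mul τ p q
  have hpqne : p * q ≠ 0 := by
    intro hc
    have : (τ p : MA K X) * τ q = 0 := by rw [← hpq, hc, map_zero]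
    exact mul_ne_zero' (tau_ne_zero hp) (tau_ne_zero hq) this
  obtain ⟨hr1, hr2⟩ := alsRank_eq_hrank hpqne
  have hm : hrank (τ (p * q) : MA K X) + 1 = np + nq := by
    rw [hpq, hrank_mul (tau_ne_zero hp) (tau_ne_zero hq)]
    rw [hpmin] at hp1
    rw [hqmin] at hq1
    omega
  have heq : hrank (τ (p * q) : MA K X) = np + nq - 1 := by omega
  rw [heq] at hr1 hr2
  exact ⟨hr2, hr1⟩
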